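/- Let n ≥ 3 be an integer and define f : ℝ → ℝ by f(r) = (r · log r)^{-(n−2)/2} for r > 1. Then there exists r₀ > 1 such that for all r ≥ r₀ one has f''(r) + ((n−1)/r) · f'(r) < 0; indeed this holds whenever (log r)² > n/(n−2). -/

import Mathlib

open Real

/-- Strict superharmonicity of the radial profile `v = (r ln r)^{-(n-2)/2}` outside
a compact set: for `n ≥ 3` and `f r = (r · log r)^{-(n−2)/2}`, there is `r₀ > 1`
such that `f''(r) + ((n−1)/r) f'(r) < 0` for all `r ≥ r₀`; indeed this holds
whenever `r > 1` and `(log r)² > n/(n−2)`. -/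
lemma aux_key (n : ℕ) (hn : 3 ≤ n) (f : ℝ → ℝ)
    (hf : ∀ r : ℝ, f r = (r * Real.log r) ^ (-(((n : ℝ) - 2) / 2)))
    (r : ℝ) (hr : 1 < r) (hL : (Real.log r) ^ 2 > (n : ℝ) / ((n : ℝ) - 2)) :
    deriv (deriv f) r + (((n : ℝ) - 1) / r) * deriv f r < 0 := by
  set α : ℝ := -(((n : ℝ) - 2) / 2) with hα
  have hfe : f = fun x => (x * Real.log x) ^ α := funext hf
  have hn2 : (0:ℝ) < (n:ℝ) - 2 := by
    have : (3:ℝ) ≤ (n:ℝ) := by exact_mod_cast hn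
    linarith
  have hαneg : α < 0 := by rw [hα]; linarith
  -- derivative of g = x * log x at x > 1
  have hg' : ∀ x : ℝ, 1 < x → HasDerivAt (fun y => y * Real.log y) (Real.log x + 1) x := by
    intro x hx
    have h := (hasDerivAt_id x).mul (Real.hasDerivAt_log (by linarith : x ≠ 0))
    simpa [mul_comm, mul_inv_cancel₀ (show x ≠ 0 by linarith)] using (show HasDerivAt (fun y => y * Real.log y) _ x from h)
  have hgpos : ∀ x : ℝ, 1 < x → 0 < x * Real.log x := fun x hx =>
    mul_pos (by linarith) (Real.log_pos hx)
  -- first derivative of f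
  have hd1 : ∀ x : ℝ, 1 < x →
      HasDerivAt f (α * (x * Real.log x) ^ (α - 1) * (Real.log x + 1)) x := by
    intro x hx
    rw [hfe]
    have h := (hg' x hx).rpow_const (p := α) (Or.inl (hgpos x hx).ne')
    convert h using 1
    ring
  -- deriv f agrees with explicit formula near r
  set f₁ : ℝ → ℝ := fun x => α * (x * Real.log x) ^ (α - 1) * (Real.log x + 1) with hf₁
  have hev : deriv f =ᶠ[nhds r] f₁ := by
    filter_upwards [isOpen_Ioi.mem_nhds (show r ∈ Set.Ioi 1 from hr)] with x hx
    exact (hd1 x hx).deriv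
  set L := Real.log r with hLdef
  set g := r * L with hgdef
  have hgp : 0 < g := hgpos r hr
  have hrne : r ≠ 0 := by linarith
  -- derivative of f₁ at r
  have hd2 : HasDerivAt f₁
      (α * ((α - 1) * g ^ (α - 2) * (L + 1)) * (L + 1)
        + (α * g ^ (α - 1)) * (1 / r)) r := by
    have hp : HasDerivAt (fun x => α * (x * Real.log x) ^ (α - 1))
        (α * ((α - 1) * g ^ (α - 2) * (L + 1))) r := by
      have h : HasDerivAt (fun x => α * (x * Real.log x) ^ (α - 1)) _ r := ((hg' r hr).rpow_const (p := α - 1) (Or.inl hgp.ne')).const_mul α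
      convert h using 1
      rw [show α - 1 - 1 = α - 2 by ring]
      ring
    have hq : HasDerivAt (fun x => Real.log x + 1) (1 / r) r := by
      simpa [one_div] using (Real.hasDerivAt_log hrne).add_const 1
    simpa [hf₁, hgdef, hLdef] using (show HasDerivAt (fun x => α * (x * Real.log x) ^ (α - 1) * (Real.log x + 1)) _ r from hp.mul hq)
  have hderiv2 : deriv (deriv f) r = α * ((α - 1) * g ^ (α - 2) * (L + 1)) * (L + 1)
        + (α * g ^ (α - 1)) * (1 / r) := by
    rw [hev.deriv_eq]; exact hd2.deriv
  have hderiv1 : deriv f r = α * g ^ (α - 1) * (L + 1) := (hd1 r hr).deriv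
  rw [hderiv2, hderiv1]
  -- rewrite g^(α-1) = g^(α-2) * g
  have hpow : g ^ (α - 1) = g ^ (α - 2) * g := by
    rw [show α - 1 = (α - 2) + 1 by ring, Real.rpow_add_one hgp.ne']
  set G : ℝ := g ^ (α - 2) with hG
  have hGpos : 0 < G := Real.rpow_pos_of_pos hgp _
  have hLpos : 0 < L := Real.log_pos hr
  -- key algebraic identity
  have hEq : α * ((α - 1) * G * (L + 1)) * (L + 1) + (α * (G * g)) * (1 / r)
      + (((n:ℝ) - 1) / r) * (α * (G * g) * (L + 1))
      = α * G * ((((n:ℝ) - 2) * L ^ 2 - (n:ℝ)) / 2) := by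
    rw [hgdef, hα]
    field_simp
    ring
  rw [hpow, hEq]
  have hB : 0 < ((n:ℝ) - 2) * L ^ 2 - (n:ℝ) := by
    rw [gt_iff_lt, div_lt_iff₀ hn2] at hL
    linarith
  have : α * G < 0 := mul_neg_of_neg_of_pos hαneg hGpos
  have := mul_neg_of_neg_of_pos this (by positivity : 0 < (((n:ℝ) - 2) * L ^ 2 - (n:ℝ)) / 2)
  linarith

theorem radial_laplacian_eventually_negative (n : ℕ) (hn : 3 ≤ n)
    (f : ℝ → ℝ)
    (hf : ∀ r : ℝ, f r = (r * Real.log r) ^ (-(((n : ℝ) - 2) / 2))) :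
    (∃ r₀ : ℝ, 1 < r₀ ∧ ∀ r : ℝ, r₀ ≤ r →
        deriv (deriv f) r + (((n : ℝ) - 1) / r) * deriv f r < 0) ∧
    (∀ r : ℝ, 1 < r → (Real.log r) ^ 2 > (n : ℝ) / ((n : ℝ) - 2) →
        deriv (deriv f) r + (((n : ℝ) - 1) / r) * deriv f r < 0) := by
  have hn2 : (0:ℝ) < (n:ℝ) - 2 := by
    have : (3:ℝ) ≤ (n:ℝ) := by exact_mod_cast hn
    linarith
  have hn3 : (3:ℝ) ≤ (n:ℝ) := by exact_mod_cast hn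
  constructor
  · refine ⟨Real.exp n, ?_, ?_⟩
    · calc (1:ℝ) < Real.exp 1 := by
            simpa using Real.one_lt_exp_iff_of_nonneg (by norm_num) |>.mpr one_pos
        _ ≤ Real.exp n := Real.exp_le_exp.mpr (by linarith)
    · intro r hrr
      have hr1 : 1 < r := by
        have : (1:ℝ) < Real.exp n := by
          calc (1:ℝ) < Real.exp 1 := by
                simpa using Real.one_lt_exp_iff_of_nonneg (by norm_num) |>.mpr one_pos
            _ ≤ Real.exp n := Real.exp_le_exp.mpr (by linarith)
        linarith
      have hLn : (n:ℝ) ≤ Real.log r := by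
        have := Real.log_le_log (Real.exp_pos _) hrr
        simpa using this
      apply aux_key n hn f hf r hr1
      rw [gt_iff_lt, div_lt_iff₀ hn2]
      nlinarith
  · intro r hr hL
    exact aux_key n hn f hf r hr hL
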